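/- Let A = (A₁,…,A_n) be a toric system on a surface X with A_k² = -2 for some k. Then the transposed sequence perm_k(A), defined by replacing (A_{k-1}, A_k, A_{k+1}) with (A_{k-1}+A_k, -A_k, A_k+A_{k+1}) (indices mod n, with the stated conventions at k = 1 and k = n), is again a toric system on X, and (perm_k(A))_i² = A_i² for all i after the appropriate reindexing (i.e. the sequence of self-intersections is unchanged). -/

import Mathlib

private lemma per_dvd {Pic : Type*} {n : ℕ} (f : ℤ → Pic) (hf : ∀ i : ℤ, f (i + n) = f i) :
    ∀ i j : ℤ, (n : ℤ) ∣ j - i → f j = f i := by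
  have h2 : ∀ x : ℤ, f (x - n) = f x := by
    intro x
    have h := hf (x - n)
    rw [show x - (n:ℤ) + n = x by ring] at h
    exact h.symm
  have key : ∀ m : ℤ, ∀ i : ℤ, f (i + n * m) = f i := by
    intro m
    induction m using Int.induction_on with
    | zero => simp
    | succ m ih => intro i; rw [show i + (n:ℤ) * (m+1) = (i + n * m) + n by ring, hf, ih]
    | pred m ih => intro i; rw [show i + (n:ℤ) * (-m-1) = (i + n * (-m)) - n by ring, h2, ih]
  rintro i j ⟨m, hm⟩
  rw [show j = i + n * m by linarith, key]

theorem transposition_is_toric_system {Pic : Type*} [AddCommGroup Pic]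
    (inter : Pic →ₗ[ℤ] Pic →ₗ[ℤ] ℤ)
    (hsymm : ∀ a b : Pic, inter a b = inter b a)
    (K : Pic) (n : ℕ) (hn : 3 ≤ n)
    (A : ℤ → Pic)
    (hAper : ∀ i : ℤ, A (i + n) = A i)
    (hAadj : ∀ i : ℤ, inter (A i) (A (i + 1)) = 1)
    (hAorth : ∀ i j : ℤ, ¬((n : ℤ) ∣ j - i) → ¬((n : ℤ) ∣ j - i - 1) →
      ¬((n : ℤ) ∣ j - i + 1) → inter (A i) (A j) = 0)
    (hAsum : ∑ i ∈ Finset.range n, A (i : ℤ) = -K)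
    (k : ℤ) (hk : inter (A k) (A k) = -2)
    (B : ℤ → Pic)
    (hBper : ∀ i : ℤ, B (i + n) = B i)
    (hBprev : B (k - 1) = A (k - 1) + A k)
    (hBk : B k = -A k)
    (hBnext : B (k + 1) = A k + A (k + 1))
    (hBrest : ∀ i : ℤ, ¬((n : ℤ) ∣ i - (k - 1)) → ¬((n : ℤ) ∣ i - k) →
      ¬((n : ℤ) ∣ i - (k + 1)) → B i = A i) :
    (∀ i : ℤ, inter (B i) (B (i + 1)) = 1) ∧
    (∀ i j : ℤ, ¬((n : ℤ) ∣ j - i) → ¬((n : ℤ) ∣ j - i - 1) →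
      ¬((n : ℤ) ∣ j - i + 1) → inter (B i) (B j) = 0) ∧
    (∑ i ∈ Finset.range n, B (i : ℤ) = -K) ∧
    (∀ i : ℤ, inter (B i) (B i) = inter (A i) (A i)) := by
  have hn3 : (3 : ℤ) ≤ (n : ℤ) := by exact_mod_cast hn
  have hnd : ∀ m : ℤ, 0 < m → m < (n : ℤ) → ¬ (n : ℤ) ∣ m := by
    intro m hm1 hm2 h
    have := Int.le_of_dvd hm1 h
    omega
  have hn1 : ¬ (n : ℤ) ∣ 1 := hnd 1 (by norm_num) (by omega)
  have hn2 : ¬ (n : ℤ) ∣ 2 := hnd 2 (by norm_num) (by omega)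
  have hAd := per_dvd A hAper
  have hBd := per_dvd B hBper
  have hsub : ∀ a b c : ℤ, (n:ℤ) ∣ a → (n:ℤ) ∣ b → a - b = c → (n:ℤ) ∣ c := by
    intro a b c ha hb h; exact h ▸ dvd_sub ha hb
  -- values
  have v1 : inter (A (k-1)) (A k) = 1 := by
    have h := hAadj (k-1); rwa [show k-1+1 = k by ring] at h
  have v1' : inter (A k) (A (k-1)) = 1 := by rw [hsymm]; exact v1
  have v2 : inter (A k) (A (k+1)) = 1 := hAadj k
  have v2' : inter (A (k+1)) (A k) = 1 := by rw [hsymm]; exact v2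
  -- B on classes
  have Bprev : ∀ i : ℤ, (n:ℤ) ∣ i - (k-1) → B i = A (k-1) + A k :=
    fun i h => (hBd (k-1) i h).trans hBprev
  have Bmid : ∀ i : ℤ, (n:ℤ) ∣ i - k → B i = -A k :=
    fun i h => (hBd k i h).trans hBk
  have Bnext : ∀ i : ℤ, (n:ℤ) ∣ i - (k+1) → B i = A k + A (k+1) :=
    fun i h => (hBd (k+1) i h).trans hBnext
  -- `A k` is orthogonal to everything away from k-1, k, k+1
  have hAkrest : ∀ j : ℤ, ¬((n:ℤ) ∣ j - (k-1)) → ¬((n:ℤ) ∣ j - k) → ¬((n:ℤ) ∣ j - (k+1)) →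
      inter (A k) (A j) = 0 := by
    intro j ha hb hc
    exact hAorth k j hb (by rwa [show j - k - 1 = j - (k+1) by ring])
      (by rwa [show j - k + 1 = j - (k-1) by ring])
  -- Part 1: adjacency
  have part1 : ∀ i : ℤ, inter (B i) (B (i+1)) = 1 := by
    intro i
    by_cases h1 : (n:ℤ) ∣ i - (k-1)
    · rw [Bprev i h1, Bmid (i+1) (by rwa [show i+1-k = i - (k-1) by ring])]
      simp only [map_add, map_neg, LinearMap.add_apply, LinearMap.neg_apply]
      linarith [v1, hk]
    by_cases h2 : (n:ℤ) ∣ i - k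
    · rw [Bmid i h2, Bnext (i+1) (by rwa [show i+1-(k+1) = i - k by ring])]
      simp only [map_add, map_neg, LinearMap.add_apply, LinearMap.neg_apply]
      linarith [v2, hk]
    by_cases h3 : (n:ℤ) ∣ i - (k+1)
    · by_cases h4 : (n:ℤ) ∣ 3
      · -- n = 3 case : i+1 ≡ k-1
        rw [Bnext i h3, Bprev (i+1) (hsub (i - (k+1)) (-3) (i+1-(k-1)) h3 (h4.neg_right) (by ring))]
        have c1 : inter (A (k+1)) (A (k-1)) = 1 := by
          have hrw : A (k-1) = A (k+2) := hAd (k+2) (k-1) (hsub 0 3 (k-1-(k+2)) (dvd_zero _) h4 (by ring))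
          rw [hrw]
          have h := hAadj (k+1); rwa [show k+1+1 = k+2 by ring] at h
        simp only [map_add, map_neg, LinearMap.add_apply, LinearMap.neg_apply]
        linarith [v1', v2', hk, c1]
      · -- i+1 ≡ k+2 is in the "rest" class
        have e1 : ¬ (n:ℤ) ∣ i+1-(k-1) := fun h => h4 (hsub (i+1-(k-1)) (i-(k+1)) 3 h h3 (by ring))
        have e2 : ¬ (n:ℤ) ∣ i+1-k := fun h => hn2 (hsub (i+1-k) (i-(k+1)) 2 h h3 (by ring))
        have e3 : ¬ (n:ℤ) ∣ i+1-(k+1) := fun h => hn1 (hsub (i+1-(k+1)) (i-(k+1)) 1 h h3 (by ring))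
        rw [Bnext i h3, hBrest (i+1) e1 e2 e3,
          hAd (k+2) (i+1) (by rw [show i+1-(k+2) = i - (k+1) by ring]; exact h3)]
        have c2 : inter (A (k+1)) (A (k+2)) = 1 := by
          have h := hAadj (k+1); rwa [show k+1+1 = k+2 by ring] at h
        have c3 : inter (A k) (A (k+2)) = 0 := by
          apply hAorth k (k+2)
          · rwa [show k+2-k = 2 by ring]
          · rwa [show k+2-k-1 = 1 by ring]
          · rwa [show k+2-k+1 = 3 by ring]
        simp only [map_add, LinearMap.add_apply]
        linarith [c2, c3]
    · -- i in rest class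
      rw [hBrest i h1 h2 h3]
      by_cases h4 : (n:ℤ) ∣ i+1-(k-1)
      · rw [Bprev (i+1) h4]
        have c1 : inter (A i) (A (k-1)) = 1 := by
          rw [hAd (i+1) (k-1) (by rw [show k-1-(i+1) = -(i+1-(k-1)) by ring]; exact (dvd_neg.mpr h4))]
          exact hAadj i
        have c2 : inter (A i) (A k) = 0 := by
          rw [hsymm]
          apply hAkrest i h1 h2 h3
        simp only [map_add, LinearMap.add_apply]
        linarith [c1, c2]
      · have e2 : ¬ (n:ℤ) ∣ i+1-k := by rwa [show i+1-k = i-(k-1) by ring]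
        have e3 : ¬ (n:ℤ) ∣ i+1-(k+1) := by rwa [show i+1-(k+1) = i-k by ring]
        rw [hBrest (i+1) h4 e2 e3]
        exact hAadj i
  -- Part 2: orthogonality
  have part2 : ∀ i j : ℤ, ¬((n : ℤ) ∣ j - i) → ¬((n : ℤ) ∣ j - i - 1) →
      ¬((n : ℤ) ∣ j - i + 1) → inter (B i) (B j) = 0 := by
    intro i j hij0 hij1 hij2
    by_cases h1 : (n:ℤ) ∣ i - (k-1)
    · by_cases g1 : (n:ℤ) ∣ j - (k-1)
      · exact absurd (hsub (j-(k-1)) (i-(k-1)) (j-i) g1 h1 (by ring)) hij0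
      by_cases g2 : (n:ℤ) ∣ j - k
      · exact absurd (hsub (j-k) (i-(k-1)) (j-i-1) g2 h1 (by ring)) hij1
      by_cases g3 : (n:ℤ) ∣ j - (k+1)
      · -- i ≡ k-1, j ≡ k+1
        have hn3' : ¬ (n:ℤ) ∣ 3 := by
          intro h
          exact hij2 (hsub (j-(k+1)) ((i-(k-1)) - 3) (j-i+1) g3 (dvd_sub h1 h) (by ring))
        have c0 : inter (A (k-1)) (A (k+1)) = 0 := by
          apply hAorth (k-1) (k+1)
          · rwa [show k+1-(k-1) = 2 by ring]
          · rwa [show k+1-(k-1)-1 = 1 by ring]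
          · rwa [show k+1-(k-1)+1 = 3 by ring]
        rw [Bprev i h1, Bnext j g3]
        simp only [map_add, LinearMap.add_apply]
        linarith [v1, v2, hk, c0]
      · -- i ≡ k-1, j rest
        rw [Bprev i h1, hBrest j g1 g2 g3]
        have c1 : inter (A (k-1)) (A j) = 0 := by
          apply hAorth (k-1) j
          · exact g1
          · rwa [show j-(k-1)-1 = j-k by ring]
          · intro h
            exact hij2 (hsub (j-(k-1)+1) (i-(k-1)) (j-i+1) h h1 (by ring))
        have c2 := hAkrest j g1 g2 g3
        simp only [map_add, LinearMap.add_apply]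
        linarith [c1, c2]
    by_cases h2 : (n:ℤ) ∣ i - k
    · by_cases g1 : (n:ℤ) ∣ j - (k-1)
      · exact absurd (hsub (j-(k-1)) (i-k) (j-i+1) g1 h2 (by ring)) hij2
      by_cases g2 : (n:ℤ) ∣ j - k
      · exact absurd (hsub (j-k) (i-k) (j-i) g2 h2 (by ring)) hij0
      by_cases g3 : (n:ℤ) ∣ j - (k+1)
      · exact absurd (hsub (j-(k+1)) (i-k) (j-i-1) g3 h2 (by ring)) hij1
      · rw [Bmid i h2, hBrest j g1 g2 g3]
        simp only [map_neg, LinearMap.neg_apply]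
        linarith [hAkrest j g1 g2 g3]
    by_cases h3 : (n:ℤ) ∣ i - (k+1)
    · by_cases g1 : (n:ℤ) ∣ j - (k-1)
      · -- i ≡ k+1, j ≡ k-1
        have hn3' : ¬ (n:ℤ) ∣ 3 := by
          intro h
          exact hij1 (hsub (j-(k-1)) ((i-(k+1)) + 3) (j-i-1) g1 (dvd_add h3 h) (by ring))
        have c0 : inter (A (k+1)) (A (k-1)) = 0 := by
          rw [hsymm]
          apply hAorth (k-1) (k+1)
          · rwa [show k+1-(k-1) = 2 by ring]
          · rwa [show k+1-(k-1)-1 = 1 by ring]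
          · rwa [show k+1-(k-1)+1 = 3 by ring]
        rw [Bnext i h3, Bprev j g1]
        simp only [map_add, LinearMap.add_apply]
        linarith [v1', v2', hk, c0]
      by_cases g2 : (n:ℤ) ∣ j - k
      · exact absurd (hsub (j-k) (i-(k+1)) (j-i+1) g2 h3 (by ring)) hij2
      by_cases g3 : (n:ℤ) ∣ j - (k+1)
      · exact absurd (hsub (j-(k+1)) (i-(k+1)) (j-i) g3 h3 (by ring)) hij0
      · rw [Bnext i h3, hBrest j g1 g2 g3]
        have c1 : inter (A (k+1)) (A j) = 0 := by
          apply hAorth (k+1) j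
          · exact g3
          · intro h
            exact hij1 (hsub (j-(k+1)-1) (i-(k+1)) (j-i-1) h h3 (by ring))
          · rwa [show j-(k+1)+1 = j-k by ring]
        simp only [map_add, LinearMap.add_apply]
        linarith [hAkrest j g1 g2 g3, c1]
    · -- i rest
      rw [hBrest i h1 h2 h3]
      have hik : inter (A i) (A k) = 0 := by rw [hsymm]; exact hAkrest i h1 h2 h3
      by_cases g1 : (n:ℤ) ∣ j - (k-1)
      · rw [Bprev j g1]
        have c1 : inter (A i) (A (k-1)) = 0 := by
          apply hAorth i (k-1)
          · intro h
            exact hij0 (hsub (j-(k-1)) (-(k-1-i)) (j-i) g1 (dvd_neg.mpr h) (by ring))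
          · intro h
            exact hij1 (hsub (j-(k-1)) (-(k-1-i-1)) (j-i-1) g1 (dvd_neg.mpr h) (by ring))
          · intro h
            exact hij2 (hsub (j-(k-1)) (-(k-1-i+1)) (j-i+1) g1 (dvd_neg.mpr h) (by ring))
        simp only [map_add, LinearMap.add_apply]
        linarith [c1, hik]
      by_cases g2 : (n:ℤ) ∣ j - k
      · rw [Bmid j g2]
        simp only [map_neg, LinearMap.neg_apply]
        linarith [hik]
      by_cases g3 : (n:ℤ) ∣ j - (k+1)
      · rw [Bnext j g3]
        have c1 : inter (A i) (A (k+1)) = 0 := by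
          apply hAorth i (k+1)
          · intro h
            exact hij0 (hsub (j-(k+1)) (-(k+1-i)) (j-i) g3 (dvd_neg.mpr h) (by ring))
          · intro h
            exact hij1 (hsub (j-(k+1)) (-(k+1-i-1)) (j-i-1) g3 (dvd_neg.mpr h) (by ring))
          · intro h
            exact hij2 (hsub (j-(k+1)) (-(k+1-i+1)) (j-i+1) g3 (dvd_neg.mpr h) (by ring))
        simp only [map_add, LinearMap.add_apply]
        linarith [c1, hik]
      · rw [hBrest j g1 g2 g3]
        apply hAorth i j hij0 hij1 hij2
  -- Part 4: self-intersections
  have part4 : ∀ i : ℤ, inter (B i) (B i) = inter (A i) (A i) := by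
    intro i
    by_cases h1 : (n:ℤ) ∣ i - (k-1)
    · rw [Bprev i h1, hAd (k-1) i h1]
      simp only [map_add, LinearMap.add_apply]
      linarith [v1, v1', hk]
    by_cases h2 : (n:ℤ) ∣ i - k
    · rw [Bmid i h2, hAd k i h2]
      simp only [map_neg, LinearMap.neg_apply]
      linarith [hk]
    by_cases h3 : (n:ℤ) ∣ i - (k+1)
    · rw [Bnext i h3, hAd (k+1) i h3]
      simp only [map_add, LinearMap.add_apply]
      linarith [v2, v2', hk]
    · rw [hBrest i h1 h2 h3]
  -- Part 3: the sum
  have exrep : ∀ r : ℤ, ∃ t : ℕ, t < n ∧ (n:ℤ) ∣ (t:ℤ) - r := by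
    intro r
    have h1 : 0 ≤ r % (n:ℤ) := Int.emod_nonneg r (by omega)
    have h2 : r % (n:ℤ) < n := Int.emod_lt_of_pos r (by omega)
    refine ⟨(r % (n:ℤ)).toNat, by omega, ?_⟩
    rw [Int.toNat_of_nonneg h1, Int.emod_def]
    exact ⟨-(r / (n:ℤ)), by ring⟩
  obtain ⟨t1, ht1, d1⟩ := exrep (k-1)
  obtain ⟨t2, ht2, d2⟩ := exrep k
  obtain ⟨t3, ht3, d3⟩ := exrep (k+1)
  have uniq : ∀ a b : ℕ, a < n → b < n → (n:ℤ) ∣ (a:ℤ) - b → a = b := by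
    intro a b ha hb hd
    have h0 : ((a:ℤ) - b) = 0 := by
      apply Int.eq_zero_of_abs_lt_dvd hd
      have ha' : (a:ℤ) < n := by exact_mod_cast ha
      have hb' : (b:ℤ) < n := by exact_mod_cast hb
      have : (0:ℤ) ≤ a := Int.ofNat_nonneg a
      have : (0:ℤ) ≤ b := Int.ofNat_nonneg b
      rw [abs_lt]; omega
    omega
  have ht12 : t1 ≠ t2 := fun h =>
    hn1 (hsub ((t1:ℤ)-(k-1)) ((t2:ℤ)-k) 1 d1 d2 (by rw [h]; ring))
  have ht13 : t1 ≠ t3 := fun h =>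
    hn2 (hsub ((t1:ℤ)-(k-1)) ((t3:ℤ)-(k+1)) 2 d1 d3 (by rw [h]; ring))
  have ht23 : t2 ≠ t3 := fun h =>
    hn1 (hsub ((t2:ℤ)-k) ((t3:ℤ)-(k+1)) 1 d2 d3 (by rw [h]; ring))
  have hs_sub : ({t1, t2, t3} : Finset ℕ) ⊆ Finset.range n := by
    intro m hm
    simp only [Finset.mem_insert, Finset.mem_singleton] at hm
    rcases hm with h | h | h <;> subst h <;> simp [Finset.mem_range, ht1, ht2, ht3]
  have h_rest : ∀ m ∈ Finset.range n \ ({t1, t2, t3} : Finset ℕ), B (m:ℤ) = A (m:ℤ) := by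
    intro m hm
    simp only [Finset.mem_sdiff, Finset.mem_range, Finset.mem_insert,
      Finset.mem_singleton, not_or] at hm
    obtain ⟨hmn, hm1, hm2, hm3⟩ := hm
    apply hBrest
    · intro h
      exact hm1 (uniq m t1 hmn ht1 (hsub ((m:ℤ)-(k-1)) ((t1:ℤ)-(k-1)) ((m:ℤ)-t1) h d1 (by ring)))
    · intro h
      exact hm2 (uniq m t2 hmn ht2 (hsub ((m:ℤ)-k) ((t2:ℤ)-k) ((m:ℤ)-t2) h d2 (by ring)))
    · intro h
      exact hm3 (uniq m t3 hmn ht3 (hsub ((m:ℤ)-(k+1)) ((t3:ℤ)-(k+1)) ((m:ℤ)-t3) h d3 (by ring)))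
  have hsum_s : ∑ m ∈ ({t1, t2, t3} : Finset ℕ), B (m:ℤ)
      = ∑ m ∈ ({t1, t2, t3} : Finset ℕ), A (m:ℤ) := by
    rw [Finset.sum_insert (by simp [ht12, ht13]), Finset.sum_insert (by simp [ht23]),
      Finset.sum_singleton, Finset.sum_insert (by simp [ht12, ht13]),
      Finset.sum_insert (by simp [ht23]), Finset.sum_singleton]
    rw [Bprev _ d1, Bmid _ d2, Bnext _ d3, hAd (k-1) _ d1, hAd k _ d2, hAd (k+1) _ d3]
    abel
  have part3 : ∑ i ∈ Finset.range n, B (i : ℤ) = -K := by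
    rw [← hAsum, ← Finset.sum_sdiff hs_sub, ← Finset.sum_sdiff hs_sub (f := fun m : ℕ => A (m:ℤ))]
    rw [hsum_s]
    congr 1
    exact Finset.sum_congr rfl h_rest
  exact ⟨part1, part2, part3, part4⟩
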